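/- Let p be a prime, G a group, ℓ ≥ 0 and k ≥ 1 integers, and let N ≤ G be a subgroup of finite index (G : N) = p^ℓ that is isomorphic as a group to the direct product of k copies of G. Then for every natural number r there exists a subgroup H ≤ G with (G : H) = p^{ℓ·r} such that H is isomorphic to the direct product of (k−1)·r + 1 copies of G. -/

import Mathlib

open Filter Topology

/-- `ngen G` is the minimal number of generators `d(G)` of a group `G`. -/
noncomputable def ngen (G : Type*) [Group G] : ℕ :=
  sInf {n | ∃ S : Finset G, S.card = n ∧ Subgroup.closure (S : Set G) = ⊤}

open scoped commutatorElement in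
/-- `phiP p G` is `Φ_p(G)`, the subgroup of `G` generated by all commutators
and all `p`-th powers. -/
def phiP (p : ℕ) (G : Type*) [Group G] : Subgroup G :=
  Subgroup.normalClosure ({x | ∃ a b : G, x = ⁅a, b⁆} ∪ {x | ∃ g : G, x = g ^ p})

instance phiP_normal (p : ℕ) (G : Type*) [Group G] : (phiP p G).Normal :=
  Subgroup.normalClosure_normal

/-- `dp p G = d_p(G)`, the minimal number of generators of `G/Φ_p(G)`. -/
noncomputable def dp (p : ℕ) (G : Type*) [Group G] : ℕ := ngen (G ⧸ phiP p G)

/-- `subCount G n = s_n(G)`, the number of (finite-index) subgroups of `G`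
of index at most `n`. -/
noncomputable def subCount (G : Type*) [Group G] (n : ℕ) : ℕ :=
  Nat.card {H : Subgroup G // 0 < H.index ∧ H.index ≤ n}

/-- `dpMax p G m = d_p(m)`, the maximum of `d_p(U)` over subgroups `U ≤ G`
of index exactly `p^m`. -/
noncomputable def dpMax (p : ℕ) (G : Type*) [Group G] (m : ℕ) : ℕ :=
  sSup {d | ∃ U : Subgroup G, U.index = p ^ m ∧ d = dp p ↥U}


/-- Pointwise product of function groups over a sum type. -/
def sumElimMulEquiv (α β : Type*) (G : Type*) [Group G] :
    ((α → G) × (β → G)) ≃* (α ⊕ β → G) where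
  toFun p := Sum.elim p.1 p.2
  invFun f := (f ∘ Sum.inl, f ∘ Sum.inr)
  left_inv p := rfl
  right_inv f := by funext i; cases i <;> rfl
  map_mul' p q := by funext i; cases i <;> rfl

def consSubgroupEquiv {G : Type*} [Group G] (N : Subgroup G) (m : ℕ) :
    (Subgroup.pi Set.univ (Fin.cons N (fun _ : Fin m => ⊤) : ∀ _ : Fin (m+1), Subgroup G)) ≃*
      N × (Fin m → G) where
  toFun g := (⟨g.1 0, by simpa using g.2 0 (Set.mem_univ _)⟩, fun i => g.1 i.succ)
  invFun p := ⟨Fin.cons (p.1 : G) p.2, by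
    intro i _
    refine Fin.cases ?_ ?_ i
    · simpa using p.1.2
    · intro j; simp⟩
  left_inv g := Subtype.ext (funext fun i => Fin.cases rfl (fun j => rfl) i)
  right_inv p := by ext <;> simp
  map_mul' g h := rfl

/-- The key inductive step. -/
theorem step_lemma {G : Type*} [Group G] (N : Subgroup G) (k m : ℕ)
    (eN : N ≃* (Fin k → G)) (H : Subgroup G) (e : H ≃* (Fin (m + 1) → G)) :
    ∃ H' : Subgroup G, H'.index = N.index * H.index ∧
      Nonempty (H' ≃* (Fin (k + m) → G)) := by
  set K : Subgroup (Fin (m + 1) → G) :=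
    Subgroup.pi Set.univ (Fin.cons N (fun _ : Fin m => ⊤) : ∀ _ : Fin (m+1), Subgroup G) with hK
  have hKidx : K.index = N.index := by
    rw [hK, Subgroup.index_pi, Fin.prod_univ_succ]
    simp
  refine ⟨(K.comap (e : H →* (Fin (m+1) → G))).map H.subtype, ?_, ?_⟩
  · rw [Subgroup.index_map_subtype, Subgroup.index_comap_of_surjective _ e.surjective, hKidx]
  · have e1 := (Subgroup.equivMapOfInjective (K.comap (e : H →* (Fin (m+1) → G)))
      H.subtype H.subtype_injective).symm
    have hcm : K.comap (e : H →* (Fin (m+1) → G)) = K.map (e.symm : (Fin (m+1) → G) →* H) := by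
      rw [Subgroup.comap_equiv_eq_map_symm]
    have e2 : (K.comap (e : H →* (Fin (m+1) → G))) ≃* K :=
      (MulEquiv.subgroupCongr hcm).trans (e.symm.subgroupMap K).symm
    have e3 := consSubgroupEquiv N m
    have e4 : (N × (Fin m → G)) ≃* ((Fin k → G) × (Fin m → G)) :=
      eN.prodCongr (MulEquiv.refl _)
    have e5 : ((Fin k → G) × (Fin m → G)) ≃* (Fin (k + m) → G) :=
      (sumElimMulEquiv _ _ G).trans (MulEquiv.arrowCongr finSumFinEquiv (MulEquiv.refl G))
    exact ⟨e1.trans (e2.trans (e3.trans (e4.trans e5)))⟩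

theorem exists_subgroup_iso_many_copies
    (p : ℕ) (hp : p.Prime) (G : Type*) [Group G]
    (ℓ k : ℕ) (hk : 1 ≤ k)
    (N : Subgroup G) (hNidx : N.index = p ^ ℓ)
    (hNiso : Nonempty (N ≃* (Fin k → G))) (r : ℕ) :
    ∃ H : Subgroup G, H.index = p ^ (ℓ * r) ∧
      Nonempty (H ≃* (Fin ((k - 1) * r + 1) → G)) := by
  induction r with
  | zero =>
    refine ⟨⊤, by simp, ⟨Subgroup.topEquiv.trans ?_⟩⟩
    exact { toFun := fun g _ => g, invFun := fun f => f 0,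
            left_inv := fun g => rfl,
            right_inv := fun f => funext fun i => congrArg f (by have := i.isLt; ext; simp_all),
            map_mul' := fun a b => rfl }
  | succ r ih =>
    obtain ⟨H, hHi, ⟨e⟩⟩ := ih
    obtain ⟨eN⟩ := hNiso
    obtain ⟨H', hidx, ⟨e'⟩⟩ := step_lemma N k ((k - 1) * r) eN H e
    have hcount : k + (k - 1) * r = (k - 1) * (r + 1) + 1 := by
      obtain ⟨k', rfl⟩ := Nat.exists_eq_add_of_le hk
      simp [Nat.mul_succ]
      ring
    refine ⟨H', ?_, ⟨e'.trans (MulEquiv.arrowCongr (finCongr hcount) (MulEquiv.refl G))⟩⟩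
    rw [hidx, hNidx, hHi, ← pow_add]
    congr 1
    ring
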